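/- Expected signal gradient: If each row a_{i,l} is a centred isotropic random vector (E a_{i,l} = 0 and E a_{i,l} a_{i,l}ᵀ = I_n), then for all ξ ∈ ℝⁿ and γ ∈ ℝ^m, E ∇_ξ f(ξ,γ) = (1/m) [‖γ‖₂² ξ − (γᵀ d) x]. -/

import Mathlib

noncomputable section
open scoped BigOperators
open MeasureTheory ProbabilityTheory

/-- squared Euclidean norm ‖v‖₂² -/
def enormSq {n : ℕ} (v : Fin n → ℝ) : ℝ := ∑ j, v j ^ 2

/-- Euclidean norm ‖v‖₂ -/
noncomputable def enorm {n : ℕ} (v : Fin n → ℝ) : ℝ := Real.sqrt (enormSq v)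

/-- sup norm ‖v‖_∞ -/
noncomputable def supNorm {n : ℕ} (v : Fin n → ℝ) : ℝ := ⨆ j, |v j|

/-- ‖d‖₁ = Σᵢ dᵢ for a positive vector d -/
def dOne {m : ℕ} (d : Fin m → ℝ) : ℝ := ∑ i, d i

/-- x* = (‖d‖₁/m) x -/
def xStar {n m : ℕ} (x : Fin n → ℝ) (d : Fin m → ℝ) : Fin n → ℝ :=
  fun j => (dOne d / m) * x j

/-- d* = (m/‖d‖₁) d -/
def dStar {m : ℕ} (d : Fin m → ℝ) : Fin m → ℝ := fun i => ((m : ℝ) / dOne d) * d i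

/-- the distance Δ(ξ,γ) = ‖ξ−x*‖₂² + (‖x*‖₂²/m)‖γ−d*‖₂² -/
def DeltaDist {n m : ℕ} (x : Fin n → ℝ) (d : Fin m → ℝ) (ξ : Fin n → ℝ) (γ : Fin m → ℝ) : ℝ :=
  enormSq (ξ - xStar x d) + (enormSq (xStar x d) / m) * enormSq (γ - dStar d)

/-- the constraint set C_ρ = {1_m + e : e ∈ 1⊥_m, ‖e‖_∞ ≤ ρ} -/
def Cset (m : ℕ) (ρ : ℝ) : Set (Fin m → ℝ) :=
  {γ | (∑ i, γ i) = m ∧ ∀ i, |γ i - 1| ≤ ρ}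

/-- the neighbourhood D_{κ,ρ} = {(ξ,γ) ∈ ℝⁿ × C_ρ : Δ(ξ,γ) ≤ κ²‖x*‖₂²} -/
def Dset {n m : ℕ} (x : Fin n → ℝ) (d : Fin m → ℝ) (κ ρ : ℝ) :
    Set ((Fin n → ℝ) × (Fin m → ℝ)) :=
  {q | q.2 ∈ Cset m ρ ∧ DeltaDist x d q.1 q.2 ≤ κ ^ 2 * enormSq (xStar x d)}

/-- residual γ̄ A ξ − d̄ A x -/
def resid {n m : ℕ} (A : Matrix (Fin m) (Fin n) ℝ) (x : Fin n → ℝ) (d : Fin m → ℝ)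
    (ξ : Fin n → ℝ) (γ : Fin m → ℝ) : Fin m → ℝ :=
  fun i => γ i * (A.mulVec ξ) i - d i * (A.mulVec x) i

/-- the objective f(ξ,γ) = (1/(2mp)) Σ_l ‖γ̄A_lξ − d̄A_lx‖₂² -/
def objF {n m p : ℕ} (A : Fin p → Matrix (Fin m) (Fin n) ℝ) (x : Fin n → ℝ) (d : Fin m → ℝ)
    (ξ : Fin n → ℝ) (γ : Fin m → ℝ) : ℝ :=
  (2 * m * p : ℝ)⁻¹ * ∑ l, enormSq (resid (A l) x d ξ γ)

/-- the signal gradient ∇_ξ f(ξ,γ) = (1/(mp)) Σ_l A_lᵀ γ̄ (γ̄A_lξ − d̄A_lx) -/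
def gradXi {n m p : ℕ} (A : Fin p → Matrix (Fin m) (Fin n) ℝ) (x : Fin n → ℝ) (d : Fin m → ℝ)
    (ξ : Fin n → ℝ) (γ : Fin m → ℝ) : Fin n → ℝ :=
  fun j => (m * p : ℝ)⁻¹ * ∑ l, ∑ i, A l i j * (γ i * resid (A l) x d ξ γ i)

/-- the gain gradient ∇_γ f(ξ,γ) = (1/(mp)) Σ_l diag(A_lξ)(γ̄A_lξ − d̄A_lx) -/
def gradGamma {n m p : ℕ} (A : Fin p → Matrix (Fin m) (Fin n) ℝ) (x : Fin n → ℝ) (d : Fin m → ℝ)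
    (ξ : Fin n → ℝ) (γ : Fin m → ℝ) : Fin m → ℝ :=
  fun i => (m * p : ℝ)⁻¹ * ∑ l, (A l).mulVec ξ i * resid (A l) x d ξ γ i

/-- the projected gain gradient ∇⊥_γ f = (I_m − (1/m)1_m1_mᵀ) ∇_γ f -/
def gradGammaPerp {n m p : ℕ} (A : Fin p → Matrix (Fin m) (Fin n) ℝ) (x : Fin n → ℝ)
    (d : Fin m → ℝ) (ξ : Fin n → ℝ) (γ : Fin m → ℝ) : Fin m → ℝ :=
  fun i => gradGamma A x d ξ γ i - (m : ℝ)⁻¹ * ∑ i', gradGamma A x d ξ γ i'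

/-- **Expected signal gradient.**
If each row a_{i,l} is centred isotropic, then E ∇_ξ f(ξ,γ) = (1/m)[‖γ‖₂² ξ − (γᵀd) x]. -/
theorem expected_signal_gradient {Ω : Type*} [MeasureSpace Ω]
    [IsProbabilityMeasure (ℙ : Measure Ω)]
    {n m p : ℕ} (hn : 0 < n) (hm : 0 < m) (hp : 0 < p)
    (A : Fin p → Ω → Matrix (Fin m) (Fin n) ℝ)
    (hMeas : ∀ l i j, Measurable fun ω => A l ω i j)
    (hIndep : iIndepFun
      (fun (q : Fin m × Fin p) ω => (fun j => A q.2 ω q.1 j)) ℙ)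
    (hInt : ∀ l i j j', Integrable (fun ω => A l ω i j * A l ω i j') ℙ)
    (hMean : ∀ l i j, ∫ ω, A l ω i j = 0)
    (hCov : ∀ l i j j', ∫ ω, A l ω i j * A l ω i j' = if j = j' then (1 : ℝ) else 0)
    (x : Fin n → ℝ) (d : Fin m → ℝ) (ξ : Fin n → ℝ) (γ : Fin m → ℝ) :
    ∀ j, (∫ ω, gradXi (fun l => A l ω) x d ξ γ j) =
      (m : ℝ)⁻¹ * (enormSq γ * ξ j - (∑ i, γ i * d i) * x j) := by
  intro j
  have hrw : ∀ ω, gradXi (fun l => A l ω) x d ξ γ j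
      = (m * p : ℝ)⁻¹ * ∑ l, ∑ i, ∑ k,
          (γ i * (γ i * ξ k - d i * x k)) * (A l ω i j * A l ω i k) := by
    intro ω
    unfold gradXi resid
    congr 1
    refine Finset.sum_congr rfl fun l _ => Finset.sum_congr rfl fun i _ => ?_
    have h1 : (A l ω).mulVec ξ i = ∑ k, A l ω i k * ξ k := rfl
    have h2 : (A l ω).mulVec x i = ∑ k, A l ω i k * x k := rfl
    rw [h1, h2]
    rw [Finset.mul_sum, Finset.mul_sum, ← Finset.sum_sub_distrib, Finset.mul_sum,
      Finset.mul_sum]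
    exact Finset.sum_congr rfl fun k _ => by ring
  simp only [hrw]
  have hint : ∀ l i k, Integrable
      (fun ω => (γ i * (γ i * ξ k - d i * x k)) * (A l ω i j * A l ω i k)) ℙ :=
    fun l i k => (hInt l i j k).const_mul _
  rw [integral_const_mul, integral_finset_sum _ (fun l _ =>
    integrable_finset_sum _ (fun i _ => integrable_finset_sum _ (fun k _ => hint l i k)))]
  have : ∀ l : Fin p, (∫ ω, ∑ i, ∑ k,
      (γ i * (γ i * ξ k - d i * x k)) * (A l ω i j * A l ω i k))
      = enormSq γ * ξ j - (∑ i, γ i * d i) * x j := by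
    intro l
    rw [integral_finset_sum _ (fun i _ => integrable_finset_sum _ (fun k _ => hint l i k))]
    have hi : ∀ i : Fin m, (∫ ω, ∑ k,
        (γ i * (γ i * ξ k - d i * x k)) * (A l ω i j * A l ω i k))
        = γ i * (γ i * ξ j - d i * x j) := by
      intro i
      rw [integral_finset_sum _ (fun k _ => hint l i k)]
      have : ∀ k : Fin n, (∫ ω, (γ i * (γ i * ξ k - d i * x k)) * (A l ω i j * A l ω i k))
          = (γ i * (γ i * ξ k - d i * x k)) * (if j = k then (1:ℝ) else 0) := by
        intro k
        rw [integral_const_mul, hCov l i j k]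
      simp only [this, mul_ite, mul_one, mul_zero, Finset.sum_ite_eq, Finset.mem_univ,
        if_true]
    simp only [hi]
    rw [enormSq, Finset.sum_mul, Finset.sum_mul, ← Finset.sum_sub_distrib]
    exact Finset.sum_congr rfl fun i _ => by ring
  simp only [this, Finset.sum_const, Finset.card_univ, Fintype.card_fin, nsmul_eq_mul]
  have hp' : (p : ℝ) ≠ 0 := Nat.cast_ne_zero.mpr hp.ne'
  have hm' : (m : ℝ) ≠ 0 := Nat.cast_ne_zero.mpr hm.ne'
  field_simp
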